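/- Let p be the n×M concentration matrix with rows p_j, Γ = p^T p invertible, a = p Γ^{-1}, and let p_{i-} be p with the i-th row replaced by zero, Γ_{i-} = p_{i-}^T p_{i-} invertible, a_{i-} = p_{i-} Γ_{i-}^{-1}. Let Ξ be the n×d data matrix with rows ξ_j^T, and Ξ_{i-} be Ξ with the i-th row replaced by zero. Define ξ̄̄ = a^T Ξ = Γ^{-1} p^T Ξ and ξ̄̄_{i-} = Γ_{i-}^{-1} p_{i-}^T Ξ_{i-}. If h_i = p_i^T Γ^{-1} p_i ≠ 1, then ξ̄̄_{i-} = ξ̄̄ + (1/(1−h_i)) a_i (p_i^T ξ̄̄ − ξ_i^T), where a_i = Γ^{-1} p_i is the i-th row of a written as a column vector. -/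

import Mathlib

open Matrix

/-- Leave-one-out update formula (Eq. 10) for the weighted component means
in the mixture with varying concentrations model. -/
theorem leave_one_out_update
    {n M d : ℕ} (p : Matrix (Fin n) (Fin M) ℝ) (Ξ : Matrix (Fin n) (Fin d) ℝ)
    (i : Fin n)
    (pim : Matrix (Fin n) (Fin M) ℝ) (hpim : pim = updateRow p i 0)
    (Ξim : Matrix (Fin n) (Fin d) ℝ) (hΞim : Ξim = updateRow Ξ i 0)
    (Γ : Matrix (Fin M) (Fin M) ℝ) (hΓ : Γ = pᵀ * p) (hΓunit : IsUnit Γ.det)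
    (Γim : Matrix (Fin M) (Fin M) ℝ) (hΓim : Γim = pimᵀ * pim)
    (hΓimunit : IsUnit Γim.det)
    (ξbar : Matrix (Fin M) (Fin d) ℝ) (hξbar : ξbar = Γ⁻¹ * pᵀ * Ξ)
    (ξbarim : Matrix (Fin M) (Fin d) ℝ) (hξbarim : ξbarim = Γim⁻¹ * pimᵀ * Ξim)
    (hi : ℝ) (hhi : hi = p i ⬝ᵥ Γ⁻¹.mulVec (p i)) (hhi1 : hi ≠ 1)
    (ai : Fin M → ℝ) (hai : ai = Γ⁻¹.mulVec (p i)) :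
    ξbarim = ξbar + (1 / (1 - hi)) • vecMulVec ai (p i ᵥ* ξbar - Ξ i) := by
  set w : Fin d → ℝ := p i ᵥ* ξbar - Ξ i with hw
  -- Γim = Γ - p_i p_iᵀ
  have hΓim' : Γim = Γ - vecMulVec (p i) (p i) := by
    ext k l
    simp only [hΓim, hΓ, hpim, mul_apply, transpose_apply, Matrix.sub_apply, vecMulVec_apply]
    have h1 : ∀ j : Fin n, updateRow p i 0 j k * updateRow p i 0 j l
        = p j k * p j l - (if j = i then p i k * p i l else 0) := by
      intro j
      by_cases hj : j = i <;> simp [updateRow_apply, hj]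
    rw [Finset.sum_congr rfl fun j _ => h1 j, Finset.sum_sub_distrib,
      Finset.sum_ite_eq' Finset.univ i fun _ => p i k * p i l]
    simp
  -- pimᵀ Ξim = pᵀ Ξ - p_i ξ_iᵀ
  have hpΞ : pimᵀ * Ξim = pᵀ * Ξ - vecMulVec (p i) (Ξ i) := by
    ext k l
    simp only [hpim, hΞim, mul_apply, transpose_apply, Matrix.sub_apply, vecMulVec_apply]
    have h1 : ∀ j : Fin n, updateRow p i 0 j k * updateRow Ξ i 0 j l
        = p j k * Ξ j l - (if j = i then p i k * Ξ i l else 0) := by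
      intro j
      by_cases hj : j = i <;> simp [updateRow_apply, hj]
    rw [Finset.sum_congr rfl fun j _ => h1 j, Finset.sum_sub_distrib,
      Finset.sum_ite_eq' Finset.univ i fun _ => p i k * Ξ i l]
    simp
  have hΓξ : Γ * ξbar = pᵀ * Ξ := by
    rw [hξbar, Matrix.mul_assoc, Matrix.mul_nonsing_inv_cancel_left _ _ hΓunit]
  have hΓai : Γ.mulVec ai = p i := by
    rw [hai, mulVec_mulVec, Matrix.mul_nonsing_inv _ hΓunit, one_mulVec]
  have hvma : vecMulVec (p i) (p i) *ᵥ ai = hi • p i := by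
    ext k
    simp [vecMulVec_apply, mulVec, dotProduct, hhi, hai, Finset.mul_sum,
      Finset.sum_mul, mul_comm, mul_assoc, mul_left_comm]
  have hΓimai : Γim.mulVec ai = (1 - hi) • p i := by
    rw [hΓim', sub_mulVec, hΓai, hvma, sub_smul, one_smul]
  -- vecMulVec mult lemmas
  have hvv1 : ∀ (u : Fin M → ℝ) (v : Fin d → ℝ), Γim * vecMulVec u v
      = vecMulVec (Γim.mulVec u) v := by
    intro u v
    ext k l
    simp [mul_apply, vecMulVec_apply, mulVec, dotProduct, Finset.sum_mul, mul_assoc]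
  have hvv2 : vecMulVec (p i) (p i) * ξbar = vecMulVec (p i) (p i ᵥ* ξbar) := by
    ext k l
    simp [mul_apply, vecMulVec_apply, vecMul, dotProduct, Finset.mul_sum, mul_assoc]
  have key : Γim * (ξbar + (1 / (1 - hi)) • vecMulVec ai w) = pimᵀ * Ξim := by
    rw [Matrix.mul_add, Matrix.mul_smul, hvv1, hΓimai, hpΞ]
    have h1h : (1 : ℝ) - hi ≠ 0 := sub_ne_zero.mpr (Ne.symm hhi1)
    have : vecMulVec ((1 - hi) • p i) w = (1 - hi) • vecMulVec (p i) w := by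
      ext k l; simp [vecMulVec_apply, mul_assoc]
    rw [this, smul_smul, one_div, inv_mul_cancel₀ h1h, one_smul]
    rw [hΓim', Matrix.sub_mul, hΓξ, hvv2, hw]
    have : vecMulVec (p i) (p i ᵥ* ξbar - Ξ i)
        = vecMulVec (p i) (p i ᵥ* ξbar) - vecMulVec (p i) (Ξ i) := by
      ext k l; simp [vecMulVec_apply, mul_sub]
    rw [this]
    abel
  rw [hξbarim, Matrix.mul_assoc, ← key,
    Matrix.nonsing_inv_mul_cancel_left _ _ hΓimunit]
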